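/- Let g be holomorphic on the open disk of radius R > 1 with Re g(z) > 0 for all |z| < R, g(0) = 1, and |g(1)| = A for some A > 0. Then |log A| ≤ log((R+1)/(R−1)). -/

import Mathlib

open Complex Metric Set

/-- Integrated Schwarz–Pick bound: if `g` is holomorphic on the disk of radius `R > 1`,
maps into the right half-plane, `g 0 = 1` and `|g 1| = A > 0`, then
`|log A| ≤ log((R+1)/(R-1))`. -/
theorem half_plane_growth_bound (g : ℂ → ℂ) (R A : ℝ) (hR : 1 < R) (hA : 0 < A)
    (hg : DifferentiableOn ℂ g (Metric.ball (0 : ℂ) R))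
    (hre : ∀ z ∈ Metric.ball (0 : ℂ) R, 0 < (g z).re)
    (h0 : g 0 = 1) (h1 : ‖g 1‖ = A) :
    |Real.log A| ≤ Real.log ((R + 1) / (R - 1)) := by
  have hR0 : (0:ℝ) < R := by linarith
  set w : ℂ → ℂ := fun z => (g z - 1) / (g z + 1) with hwdef
  have hne : ∀ z ∈ Metric.ball (0:ℂ) R, g z + 1 ≠ 0 := by
    intro z hz h
    have hzre := hre z hz
    have : (g z + 1).re = 0 := by rw [h]; simp
    simp only [Complex.add_re, Complex.one_re] at this
    linarith
  have hlt : ∀ z ∈ Metric.ball (0:ℂ) R, ‖w z‖ < 1 := by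
    intro z hz
    have hzre := hre z hz
    have hsq : ‖g z - 1‖ ^ 2 < ‖g z + 1‖ ^ 2 := by
      rw [Complex.sq_norm, Complex.sq_norm, Complex.normSq_apply, Complex.normSq_apply]
      simp only [Complex.sub_re, Complex.sub_im, Complex.add_re, Complex.add_im,
        Complex.one_re, Complex.one_im]
      nlinarith
    have habs : ‖g z - 1‖ < ‖g z + 1‖ :=
      lt_of_pow_lt_pow_left₀ 2 (norm_nonneg _) hsq
    have hpos : 0 < ‖g z + 1‖ := norm_pos_iff.mpr (hne z hz)
    simp only [hwdef, norm_div]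
    rw [div_lt_one hpos]
    exact habs
  have hw0 : w 0 = 0 := by simp [hwdef, h0]
  have hdiff : DifferentiableOn ℂ w (Metric.ball (0:ℂ) R) :=
    ((hg.sub (differentiableOn_const 1)).div (hg.add (differentiableOn_const 1)) hne)
  have hmaps : MapsTo w (Metric.ball (0:ℂ) R) (Metric.ball (w 0) 1) := by
    intro z hz
    rw [hw0, mem_ball, dist_eq_norm, sub_zero]
    exact hlt z hz
  have h1mem : (1:ℂ) ∈ Metric.ball (0:ℂ) R := by
    rw [mem_ball, dist_eq_norm, sub_zero, norm_one]; exact hR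
  have hsch := Complex.dist_le_div_mul_dist_of_mapsTo_ball hdiff (hmaps.mono_right ball_subset_closedBall) h1mem
  rw [hw0, dist_zero_right, dist_zero_right, norm_one, mul_one] at hsch
  -- hsch : ‖w 1‖ ≤ 1 / R
  set s : ℝ := ‖w 1‖ with hs
  have hs0 : 0 ≤ s := norm_nonneg _
  have hslt : s < 1 := lt_of_le_of_lt hsch (by rw [div_lt_one hR0]; exact hR)
  -- key identity : g 1 * (1 - w 1) = 1 + w 1
  have hkey : g 1 * (1 - w 1) = 1 + w 1 := by
    have hne1 : g 1 + 1 ≠ 0 := hne 1 h1mem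
    simp only [hwdef]
    field_simp
    ring
  have hnorm : A * ‖1 - w 1‖ = ‖1 + w 1‖ := by
    rw [← h1, ← norm_mul, hkey]
  have hub : ‖(1:ℂ) + w 1‖ ≤ 1 + s := by
    calc ‖(1:ℂ) + w 1‖ ≤ ‖(1:ℂ)‖ + ‖w 1‖ := norm_add_le _ _
    _ = 1 + s := by rw [norm_one]
  have hlb : 1 - s ≤ ‖(1:ℂ) + w 1‖ := by
    have := norm_sub_norm_le (1:ℂ) (-(w 1))
    simpa [hs] using this
  have hub' : ‖(1:ℂ) - w 1‖ ≤ 1 + s := by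
    calc ‖(1:ℂ) - w 1‖ ≤ ‖(1:ℂ)‖ + ‖w 1‖ := norm_sub_le _ _
    _ = 1 + s := by rw [norm_one]
  have hlb' : 1 - s ≤ ‖(1:ℂ) - w 1‖ := by
    have := norm_sub_norm_le (1:ℂ) (w 1)
    simpa [hs] using this
  -- upper bound : A ≤ (R+1)/(R-1)
  have hAub : A ≤ (R + 1) / (R - 1) := by
    rw [le_div_iff₀ (by linarith)]
    have h1 : A * (1 - s) ≤ 1 + s := by
      calc A * (1 - s) ≤ A * ‖(1:ℂ) - w 1‖ := by
            apply mul_le_mul_of_nonneg_left hlb' hA.le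
      _ = ‖(1:ℂ) + w 1‖ := hnorm
      _ ≤ 1 + s := hub
    have hRs : s * R ≤ 1 := (le_div_iff₀ hR0).mp hsch
    nlinarith [mul_nonneg hA.le (sub_nonneg.2 hRs), mul_le_mul_of_nonneg_left h1 hR0.le]
  have hAlb : (R - 1) / (R + 1) ≤ A := by
    rw [div_le_iff₀ (by linarith)]
    have h2 : 1 - s ≤ A * (1 + s) := by
      calc (1:ℝ) - s ≤ ‖(1:ℂ) + w 1‖ := hlb
      _ = A * ‖(1:ℂ) - w 1‖ := hnorm.symm
      _ ≤ A * (1 + s) := by apply mul_le_mul_of_nonneg_left hub' hA.le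
    have hRs : s * R ≤ 1 := (le_div_iff₀ hR0).mp hsch
    nlinarith [mul_nonneg hA.le (sub_nonneg.2 hRs), mul_le_mul_of_nonneg_left h2 hR0.le]
  have hQpos : 0 < (R + 1) / (R - 1) := div_pos (by linarith) (by linarith)
  rw [abs_le]
  constructor
  · have : -Real.log ((R + 1) / (R - 1)) = Real.log ((R - 1) / (R + 1)) := by
      rw [← Real.log_inv, inv_div]
    rw [this]
    exact Real.log_le_log (div_pos (by linarith) (by linarith)) hAlb
  · exact Real.log_le_log hA hAub
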